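/- Let A₀, A₁ be disjoint compact convex sets of density matrices on a d-dimensional Hilbert space. Then there exists a POVM {M₀, M₁} (i.e., 0 ≤ M₀, M₁ ≤ id, M₀ + M₁ = id) such that tr(σ₀ M₀) + tr(σ₁ M₁) > 1 for all σ₀ ∈ A₀ and σ₁ ∈ A₁. -/

import Mathlib

open scoped ComplexOrder
open Matrix Finset

namespace Stmt6Aux

variable {d : ℕ}

lemma herm_quad_im (A : Matrix (Fin d) (Fin d) ℂ) (hA : A.IsHermitian)
    (x : Fin d → ℂ) : (star x ⬝ᵥ (A *ᵥ x)).im = 0 := by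
  have h : star (star x ⬝ᵥ (A *ᵥ x)) = star x ⬝ᵥ (A *ᵥ x) := by
    calc star (star x ⬝ᵥ (A *ᵥ x)) = star (A *ᵥ x) ⬝ᵥ x := by
          rw [star_dotProduct]; simp
      _ = (star x ᵥ* Aᴴ) ⬝ᵥ x := by rw [star_mulVec]
      _ = star x ⬝ᵥ (Aᴴ *ᵥ x) := by rw [dotProduct_mulVec]
      _ = star x ⬝ᵥ (A *ᵥ x) := by rw [hA.eq]
  have := congrArg Complex.im h
  simp at this
  linarith

lemma psd_real_smul {A : Matrix (Fin d) (Fin d) ℂ} (hA : A.PosSemidef) {c : ℝ} (hc : 0 ≤ c) :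
    (((c : ℝ) : ℂ) • A).PosSemidef := by
  refine posSemidef_iff_dotProduct_mulVec.mpr ⟨?_, ?_⟩
  · show _ = _
    rw [conjTranspose_smul, hA.1.eq]
    simp [Complex.conj_ofReal]
  · intro x
    rw [smul_mulVec, dotProduct_smul, smul_eq_mul]
    exact mul_nonneg (by exact_mod_cast hc) (hA.dotProduct_mulVec_nonneg x)

lemma psd_shift (H : Matrix (Fin d) (Fin d) ℂ) (hH : H.IsHermitian) (c : ℝ)
    (hc : ∑ i, ∑ j, ‖H i j‖ ≤ c) :
    (((c : ℝ) : ℂ) • 1 + H).PosSemidef := by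
  have hherm : (((c : ℝ) : ℂ) • (1 : Matrix (Fin d) (Fin d) ℂ) + H).IsHermitian := by
    show _ = _
    rw [conjTranspose_add, conjTranspose_smul, conjTranspose_one, hH.eq]
    simp [Complex.conj_ofReal]
  refine posSemidef_iff_dotProduct_mulVec.mpr ⟨hherm, fun x => ?_⟩
  set q := star x ⬝ᵥ ((((c : ℝ) : ℂ) • 1 + H) *ᵥ x) with hqdef
  rw [Complex.le_def]
  constructor
  swap
  · simpa [hqdef] using (herm_quad_im _ hherm x).symm
  simp only [Complex.zero_re]
  set S : ℝ := ∑ i, Complex.normSq (x i) with hSdef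
  have hSnn : 0 ≤ S := Finset.sum_nonneg fun i _ => Complex.normSq_nonneg _
  have hS : star x ⬝ᵥ x = (S : ℂ) := by
    simp [dotProduct, hSdef, Complex.normSq_eq_conj_mul_self]
  have hq : q = (c : ℂ) * (S : ℂ) + star x ⬝ᵥ (H *ᵥ x) := by
    rw [hqdef, add_mulVec, smul_mulVec, one_mulVec, dotProduct_add, dotProduct_smul,
      smul_eq_mul, hS]
  set p := star x ⬝ᵥ (H *ᵥ x) with hpdef
  have hqre : q.re = c * S + p.re := by
    rw [hq]
    simp [Complex.add_re, Complex.mul_re]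
  -- bound |p|
  have key : ∀ i j : Fin d, ‖x i‖ * ‖x j‖ ≤ S := by
    intro i j
    have h1 : Complex.normSq (x i) ≤ S :=
      Finset.single_le_sum (fun k _ => Complex.normSq_nonneg (x k)) (Finset.mem_univ i)
    have h2 : Complex.normSq (x j) ≤ S :=
      Finset.single_le_sum (fun k _ => Complex.normSq_nonneg (x k)) (Finset.mem_univ j)
    have e1 : Complex.normSq (x i) = ‖x i‖ ^ 2 := (Complex.sq_norm _).symm
    have e2 : Complex.normSq (x j) = ‖x j‖ ^ 2 := (Complex.sq_norm _).symm
    nlinarith [sq_nonneg (‖x i‖ - ‖x j‖)]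
  have hb : ‖p‖ ≤ (∑ i, ∑ j, ‖H i j‖) * S := by
    calc ‖p‖ ≤ ∑ i, ‖star x i * (H *ᵥ x) i‖ := by
          rw [hpdef]; exact norm_sum_le _ _
      _ ≤ ∑ i, ∑ j, ‖H i j‖ * S := by
          apply Finset.sum_le_sum
          intro i _
          calc ‖star x i * (H *ᵥ x) i‖
              = ‖x i‖ * ‖(H *ᵥ x) i‖ := by
                rw [norm_mul]; simp
            _ ≤ ‖x i‖ * ∑ j, ‖H i j * x j‖ := by
                apply mul_le_mul_of_nonneg_left _ (norm_nonneg _)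
                simp only [mulVec, dotProduct]; exact norm_sum_le _ _
            _ = ∑ j, ‖x i‖ * (‖H i j‖ * ‖x j‖) := by
                rw [Finset.mul_sum]; simp [norm_mul, mul_assoc]
            _ ≤ ∑ j, ‖H i j‖ * S := by
                apply Finset.sum_le_sum
                intro j _
                have := key i j
                have hnn : 0 ≤ ‖H i j‖ := norm_nonneg _
                nlinarith [norm_nonneg (x i), norm_nonneg (x j)]
      _ = (∑ i, ∑ j, ‖H i j‖) * S := by simp [Finset.sum_mul]
  have hpre : -(‖p‖) ≤ p.re := by
    have := Complex.abs_re_le_norm p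
    cases abs_cases p.re <;> linarith
  rw [hqre]
  have hB : (∑ i, ∑ j, ‖H i j‖) * S ≤ c * S := by
    exact mul_le_mul_of_nonneg_right hc hSnn
  linarith

lemma f_std (f : Matrix (Fin d) (Fin d) ℂ →L[ℝ] ℝ) (i j : Fin d) (z : ℂ) :
    f (Matrix.single i j z) =
      z.re * f (Matrix.single i j 1) + z.im * f (Matrix.single i j Complex.I) := by
  have hz : Matrix.single i j z =
      z.re • Matrix.single i j (1 : ℂ) + z.im • Matrix.single i j Complex.I := by
    rw [Matrix.smul_single, Matrix.smul_single, ← Matrix.single_add]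
    rw [Complex.real_smul, Complex.real_smul, mul_one, Complex.re_add_im z]
  rw [hz, map_add, f.map_smul, f.map_smul]
  simp [smul_eq_mul]

lemma rep (f : Matrix (Fin d) (Fin d) ℂ →L[ℝ] ℝ) :
    ∃ K : Matrix (Fin d) (Fin d) ℂ, ∀ σ, ((σ * K).trace).re = f σ := by
  refine ⟨Matrix.of fun i j =>
    ((f (Matrix.single j i 1) : ℝ) : ℂ) - Complex.I * ((f (Matrix.single j i Complex.I) : ℝ) : ℂ),
    fun σ => ?_⟩
  have htr : (σ * Matrix.of (fun i j =>
      ((f (Matrix.single j i 1) : ℝ) : ℂ) - Complex.I * ((f (Matrix.single j i Complex.I) : ℝ) : ℂ))).trace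
      = ∑ i, ∑ j, σ i j * (((f (Matrix.single i j 1) : ℝ) : ℂ)
          - Complex.I * ((f (Matrix.single i j Complex.I) : ℝ) : ℂ)) := by
    simp [Matrix.trace, Matrix.mul_apply, Matrix.diag]
  rw [htr]
  have hf : f σ = ∑ i, ∑ j, ((σ i j).re * f (Matrix.single i j 1)
      + (σ i j).im * f (Matrix.single i j Complex.I)) := by
    conv_lhs => rw [matrix_eq_sum_single σ]
    rw [map_sum]
    apply Finset.sum_congr rfl
    intro i _
    rw [map_sum]
    apply Finset.sum_congr rfl
    intro j _
    exact f_std f i j (σ i j)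
  rw [hf, Complex.re_sum]
  apply Finset.sum_congr rfl
  intro i _
  rw [Complex.re_sum]
  apply Finset.sum_congr rfl
  intro j _
  simp [Complex.mul_re, Complex.sub_re, Complex.sub_im, Complex.mul_im]

lemma trace_conj (σ K : Matrix (Fin d) (Fin d) ℂ) (hσ : σ.IsHermitian) :
    (σ * Kᴴ).trace = star ((σ * K).trace) := by
  have h : σ * Kᴴ = (K * σ)ᴴ := by rw [conjTranspose_mul, hσ.eq]
  rw [h, trace_conjTranspose, trace_mul_comm]

end Stmt6Aux
/-- for disjoint compact convex sets `A₀, A₁` of density matrices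
on a `d`-dimensional Hilbert space there is a POVM `{M₀, M₁}` with
`tr(σ₀M₀) + tr(σ₁M₁) > 1` for all `σ₀ ∈ A₀`, `σ₁ ∈ A₁`. -/
theorem stmt_6 (d : ℕ) (A₀ A₁ : Set (Matrix (Fin d) (Fin d) ℂ))
    (hdens : ∀ σ ∈ A₀ ∪ A₁, σ.PosSemidef ∧ σ.trace = 1)
    (hc₀ : IsCompact A₀) (hc₁ : IsCompact A₁)
    (hv₀ : Convex ℝ A₀) (hv₁ : Convex ℝ A₁)
    (hdisj : A₀ ∩ A₁ = ∅) :
    ∃ M₀ M₁ : Matrix (Fin d) (Fin d) ℂ,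
      M₀.PosSemidef ∧ (1 - M₀).PosSemidef ∧
      M₁.PosSemidef ∧ (1 - M₁).PosSemidef ∧
      M₀ + M₁ = 1 ∧
      ∀ σ₀ ∈ A₀, ∀ σ₁ ∈ A₁, 1 < (σ₀ * M₀).trace.re + (σ₁ * M₁).trace.re := by
  classical
  haveI : LocallyConvexSpace ℝ (Matrix (Fin d) (Fin d) ℂ) :=
    (inferInstance : LocallyConvexSpace ℝ (Fin d → Fin d → ℂ))
  obtain ⟨f, u, v, hfu, huv, hfv⟩ :=
    geometric_hahn_banach_compact_closed hv₀ hc₀ hv₁ hc₁.isClosed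
      (Set.disjoint_iff_inter_eq_empty.mpr hdisj)
  obtain ⟨K, hK⟩ := Stmt6Aux.rep f
  set H : Matrix (Fin d) (Fin d) ℂ := K + Kᴴ with hHdef
  have hH : H.IsHermitian := Matrix.isHermitian_add_transpose_self K
  -- trace identity for Hermitian σ
  have htr : ∀ σ : Matrix (Fin d) (Fin d) ℂ, σ.IsHermitian →
      ((σ * H).trace).re = 2 * f σ := by
    intro σ hσ
    have : σ * H = σ * K + σ * Kᴴ := by rw [hHdef, mul_add]
    rw [this, Matrix.trace_add, Stmt6Aux.trace_conj σ K hσ, Complex.add_re]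
    have : (star ((σ * K).trace)).re = ((σ * K).trace).re := by
      simp [Complex.star_def]
    rw [this, hK σ]
    ring
  set B : ℝ := ∑ i, ∑ j, ‖H i j‖ with hBdef
  have hBnn : 0 ≤ B := Finset.sum_nonneg fun i _ =>
    Finset.sum_nonneg fun j _ => norm_nonneg _
  set c : ℝ := B + 1 with hcdef
  have hcpos : 0 < c := by linarith
  have hP1 : (((c : ℝ) : ℂ) • 1 + H).PosSemidef :=
    Stmt6Aux.psd_shift H hH c (by linarith)
  have hP2 : (((c : ℝ) : ℂ) • 1 + -H).PosSemidef := by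
    have hB' : ∑ i, ∑ j, ‖(-H) i j‖ ≤ c := by
      simp only [Matrix.neg_apply, norm_neg]
      linarith
    exact Stmt6Aux.psd_shift (-H) hH.neg c hB'
  set s : ℝ := (2 * c)⁻¹ with hsdef
  have hspos : 0 < s := by positivity
  set M₀ : Matrix (Fin d) (Fin d) ℂ := ((s : ℝ) : ℂ) • (((c : ℝ) : ℂ) • 1 + -H) with hM₀def
  set M₁ : Matrix (Fin d) (Fin d) ℂ := ((s : ℝ) : ℂ) • (((c : ℝ) : ℂ) • 1 + H) with hM₁def
  have hsum : M₀ + M₁ = 1 := by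
    rw [hM₀def, hM₁def, ← smul_add]
    have : (((c : ℝ) : ℂ) • 1 + -H) + (((c : ℝ) : ℂ) • 1 + H)
        = (((2 * c : ℝ) : ℂ)) • (1 : Matrix (Fin d) (Fin d) ℂ) := by
      push_cast
      module
    rw [this, smul_smul]
    have h2c : ((s : ℝ) : ℂ) * ((2 * c : ℝ) : ℂ) = 1 := by
      rw [← Complex.ofReal_mul]
      rw [hsdef, inv_mul_cancel₀ (by positivity : (2 * c : ℝ) ≠ 0)]
      simp
    rw [h2c, one_smul]
  have hM₀psd : M₀.PosSemidef := Stmt6Aux.psd_real_smul hP2 hspos.le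
  have hM₁psd : M₁.PosSemidef := Stmt6Aux.psd_real_smul hP1 hspos.le
  have h1M₀ : (1 : Matrix (Fin d) (Fin d) ℂ) - M₀ = M₁ := by
    rw [← hsum]; abel
  have h1M₁ : (1 : Matrix (Fin d) (Fin d) ℂ) - M₁ = M₀ := by
    rw [← hsum]; abel
  refine ⟨M₀, M₁, hM₀psd, h1M₀ ▸ hM₁psd, hM₁psd, h1M₁ ▸ hM₀psd, hsum, ?_⟩
  intro σ₀ hσ₀ σ₁ hσ₁
  obtain ⟨hps₀, ht₀⟩ := hdens σ₀ (Set.mem_union_left _ hσ₀)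
  obtain ⟨hps₁, ht₁⟩ := hdens σ₁ (Set.mem_union_right _ hσ₁)
  have tr_aux : ∀ σ : Matrix (Fin d) (Fin d) ℂ, σ.trace = 1 →
      ∀ G : Matrix (Fin d) (Fin d) ℂ,
      ((σ * (((s : ℝ) : ℂ) • (((c : ℝ) : ℂ) • 1 + G))).trace).re
        = s * (c + ((σ * G).trace).re) := by
    intro σ hσt G
    rw [Matrix.mul_smul, Matrix.trace_smul]
    have hexp : σ * (((c : ℝ) : ℂ) • 1 + G) = ((c : ℝ) : ℂ) • σ + σ * G := by
      rw [mul_add, Matrix.mul_smul, mul_one]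
    rw [hexp, Matrix.trace_add, Matrix.trace_smul, hσt]
    simp [smul_eq_mul, Complex.mul_re, Complex.add_re]
  have e₀ : (σ₀ * M₀).trace.re = s * (c - 2 * f σ₀) := by
    rw [hM₀def, tr_aux σ₀ ht₀ (-H)]
    have : ((σ₀ * -H).trace).re = -(2 * f σ₀) := by
      rw [mul_neg, Matrix.trace_neg, Complex.neg_re, htr σ₀ hps₀.isHermitian]
    rw [this]; ring
  have e₁ : (σ₁ * M₁).trace.re = s * (c + 2 * f σ₁) := by
    rw [hM₁def, tr_aux σ₁ ht₁ H, htr σ₁ hps₁.isHermitian]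
  rw [e₀, e₁]
  have hf01 : f σ₀ < f σ₁ := lt_trans (lt_trans (hfu σ₀ hσ₀) huv) (hfv σ₁ hσ₁)
  have hsc : s * (2 * c) = 1 := by
    rw [hsdef, inv_mul_cancel₀ (by positivity : (2 * c : ℝ) ≠ 0)]
  nlinarith [hspos, hf01]
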